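/- arXiv:1906.06868 — 3 statements merged into one kernel-verified Lean document; each statement's English description precedes it below -/
import Mathlib

section
/- For every n ≥ 0 and every 𝒰 = (U^0,…,U^{n+1}) ∈ 𝒢^{n+1}, setting K = sup over all grid points x_{i,j} and all m = 0,…,n+1 of |g(x_{i,j}, (D₁⁺U^m)_{i,j}, (D₁⁺U^m)_{i−1,j}, (D₂⁺U^m)_{i,j}, (D₂⁺U^m)_{i,j−1})|, one has ‖G^{n+1}(𝒰) − G^n(U^0,…,U^n)‖_∞ ≤ (1 − c_0^{n+2}) · max_{0 ≤ m ≤ n} ‖U^{m+1} − U^m‖_∞ + 2Γ(2−α)Δt^α K. -/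
noncomputable section

/-- The coefficients `c_m^{n+1}` of the discretization of the Caputo derivative. -/
def caputoCoeff (α : ℝ) (n m : ℕ) : ℝ :=
  if m = 0 then ((n : ℝ) + 1) ^ (1 - α) - (n : ℝ) ^ (1 - α)
  else 2 * ((n : ℝ) + 1 - (m : ℝ)) ^ (1 - α) - ((n : ℝ) + 2 - (m : ℝ)) ^ (1 - α)
    - ((n : ℝ) - (m : ℝ)) ^ (1 - α)

/-- A grid function on the uniform grid on the 2-torus with `M` points per direction. -/
abbrev GridFun (M : ℕ) := ZMod M × ZMod M → ℝ

/-- Forward difference in the first direction: `(D₁⁺U)_{i,j} = (U_{i+1,j} − U_{i,j})/h`. -/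
def D1 {M : ℕ} (h : ℝ) (U : GridFun M) (p : ZMod M × ZMod M) : ℝ :=
  (U (p.1 + 1, p.2) - U p) / h

/-- Forward difference in the second direction: `(D₂⁺U)_{i,j} = (U_{i,j+1} − U_{i,j})/h`. -/
def D2 {M : ℕ} (h : ℝ) (U : GridFun M) (p : ZMod M × ZMod M) : ℝ :=
  (U (p.1, p.2 + 1) - U p) / h

/-- `S(x_{i,j}, h, U) = g(x_{i,j}, (D₁⁺U)_{i,j}, (D₁⁺U)_{i−1,j}, (D₂⁺U)_{i,j}, (D₂⁺U)_{i,j−1})`,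
where `x_{i,j} = (ih, jh)`. -/
def schemeS {M : ℕ} (g : ℝ × ℝ → ℝ × ℝ × ℝ × ℝ → ℝ) (h : ℝ) (U : GridFun M)
    (p : ZMod M × ZMod M) : ℝ :=
  g ((p.1.val : ℝ) * h, (p.2.val : ℝ) * h)
    (D1 h U p, D1 h U (p.1 - 1, p.2), D2 h U p, D2 h U (p.1, p.2 - 1))

/-- The scheme operator
`G^n(𝒰)_{i,j} = ∑_{m=0}^{n} c_m^{n+1} U^m_{i,j} − ρ_α S(x_{i,j},h,U^n)`
with `ρ_α = Γ(2−α)Δt^α`. -/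
def schemeG {M : ℕ} (α Δt h : ℝ) (g : ℝ × ℝ → ℝ × ℝ × ℝ × ℝ → ℝ) (n : ℕ)
    (U : ℕ → GridFun M) : GridFun M :=
  fun p => (∑ m ∈ Finset.range (n + 1), caputoCoeff α n m * U m p)
    - Real.Gamma (2 - α) * Δt ^ α * schemeS g h (U n) p

open Finset
def bcoef (s : ℝ) (j : ℕ) : ℝ := ((j : ℝ) + 1) ^ s - (j : ℝ) ^ s

lemma bcoef_zero {s : ℝ} (hs : s ≠ 0) : bcoef s 0 = 1 := by
  simp [bcoef, Real.zero_rpow hs]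

lemma bcoef_nonneg {s : ℝ} (hs : 0 ≤ s) (j : ℕ) : 0 ≤ bcoef s j := by
  have := Real.rpow_le_rpow (x := (j:ℝ)) (y := (j:ℝ)+1) (by positivity) (by linarith) hs
  simpa [bcoef] using this

lemma bcoef_succ_le {s : ℝ} (hs0 : 0 < s) (hs1 : s < 1) (j : ℕ) :
    bcoef s (j + 1) ≤ bcoef s j := by
  have hc := (Real.concaveOn_rpow hs0.le hs1.le).2
    (Set.mem_Ici.2 (show (0:ℝ) ≤ (j:ℝ) by positivity))
    (Set.mem_Ici.2 (show (0:ℝ) ≤ (j:ℝ)+2 by positivity))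
    (by norm_num : (0:ℝ) ≤ 1/2) (by norm_num : (0:ℝ) ≤ 1/2)
    (by norm_num : (1:ℝ)/2 + 1/2 = 1)
  simp only [smul_eq_mul] at hc
  have hmid : ((1:ℝ)/2 * (j:ℝ) + 1/2 * ((j:ℝ)+2)) = (j:ℝ)+1 := by ring
  rw [hmid] at hc
  simp only [bcoef]
  push_cast
  have h2 : (j:ℝ) + 1 + 1 = (j:ℝ) + 2 := by ring
  rw [h2]
  linarith

lemma caputo_succ (α : ℝ) (N i : ℕ) (hi : i < N) :
    caputoCoeff α N (i+1) = bcoef (1-α) (N-1-i) - bcoef (1-α) (N-i) := by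
  obtain ⟨j, rfl⟩ : ∃ j, N = j + i + 1 := ⟨N - i - 1, by omega⟩
  have h1 : j + i + 1 - 1 - i = j := by omega
  have h2 : j + i + 1 - i = j + 1 := by omega
  rw [h1, h2]
  simp only [caputoCoeff, if_neg (Nat.succ_ne_zero i)]
  have e1 : ((j+i+1 : ℕ):ℝ) + 1 - ((i+1:ℕ):ℝ) = (j:ℝ) + 1 := by push_cast; ring
  have e2 : ((j+i+1 : ℕ):ℝ) + 2 - ((i+1:ℕ):ℝ) = (j:ℝ) + 2 := by push_cast; ring
  have e3 : ((j+i+1 : ℕ):ℝ) - ((i+1:ℕ):ℝ) = (j:ℝ) := by push_cast; ring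
  rw [e1, e2, e3]
  simp only [bcoef]
  push_cast
  have h3 : (j:ℝ) + 1 + 1 = (j:ℝ) + 2 := by ring
  rw [h3]
  ring

lemma caputo_zero (α : ℝ) (N : ℕ) : caputoCoeff α N 0 = bcoef (1-α) N := by
  simp [caputoCoeff, bcoef]

lemma caputo_repr (α : ℝ) (hs : (1:ℝ) - α ≠ 0) (N : ℕ) (u : ℕ → ℝ) :
    ∑ m ∈ range (N+1), caputoCoeff α N m * u m
      = u N - ∑ m ∈ range N, bcoef (1-α) (N-m) * (u (m+1) - u m) := by
  rw [Finset.sum_range_succ', caputo_zero]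
  cases N with
  | zero => simp [bcoef_zero hs]
  | succ N =>
    rw [Finset.sum_congr rfl
      (fun i hi => by rw [caputo_succ α (N+1) i (mem_range.1 hi)])]
    simp only [Nat.add_sub_cancel]
    -- goal: ∑ i ∈ range (N+1), (bcoef (1-α) (N-i) - bcoef (1-α) (N+1-i)) * u (i+1)
    --        + bcoef (1-α) (N+1) * u 0
    --   = u (N+1) - ∑ m ∈ range (N+1), bcoef (1-α) (N+1-m) * (u (m+1) - u m)
    have hA : ∑ i ∈ range (N+1), (bcoef (1-α) (N-i) - bcoef (1-α) (N+1-i)) * u (i+1)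
        = (∑ i ∈ range (N+1), bcoef (1-α) (N-i) * u (i+1))
          - ∑ i ∈ range (N+1), bcoef (1-α) (N+1-i) * u (i+1) := by
      rw [← Finset.sum_sub_distrib]
      exact Finset.sum_congr rfl (fun i _ => by ring)
    have hB : ∑ i ∈ range (N+1), bcoef (1-α) (N-i) * u (i+1)
        = (∑ i ∈ range N, bcoef (1-α) (N-i) * u (i+1)) + u (N+1) := by
      rw [Finset.sum_range_succ, Nat.sub_self, bcoef_zero hs, one_mul]
    have hC : ∑ m ∈ range (N+1), bcoef (1-α) (N+1-m) * (u (m+1) - u m)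
        = (∑ i ∈ range (N+1), bcoef (1-α) (N+1-i) * u (i+1))
          - ∑ m ∈ range (N+1), bcoef (1-α) (N+1-m) * u m := by
      rw [← Finset.sum_sub_distrib]
      exact Finset.sum_congr rfl (fun i _ => by ring)
    have hD : ∑ m ∈ range (N+1), bcoef (1-α) (N+1-m) * u m
        = (∑ i ∈ range N, bcoef (1-α) (N+1-(i+1)) * u (i+1))
          + bcoef (1-α) (N+1) * u 0 := by
      rw [Finset.sum_range_succ']
      simp
    have hE : ∀ i ∈ range N, bcoef (1-α) (N+1-(i+1)) * u (i+1)
        = bcoef (1-α) (N-i) * u (i+1) := by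
      intro i _; rw [Nat.succ_sub_succ]
    rw [hA, hB, hC, hD, Finset.sum_congr rfl hE]
    ring

lemma caputo_diff (α : ℝ) (hs : (1:ℝ) - α ≠ 0) (n : ℕ) (u : ℕ → ℝ) :
    (∑ m ∈ range (n+2), caputoCoeff α (n+1) m * u m)
      - ∑ m ∈ range (n+1), caputoCoeff α n m * u m
    = ∑ j ∈ range (n+1),
        (bcoef (1-α) (n-j) - bcoef (1-α) (n+1-j)) * (u (j+1) - u j) := by
  rw [show n + 2 = (n+1) + 1 from rfl, caputo_repr α hs (n+1) u, caputo_repr α hs n u]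
  have hA : ∑ j ∈ range (n+1),
        (bcoef (1-α) (n-j) - bcoef (1-α) (n+1-j)) * (u (j+1) - u j)
      = (∑ j ∈ range (n+1), bcoef (1-α) (n-j) * (u (j+1) - u j))
        - ∑ j ∈ range (n+1), bcoef (1-α) (n+1-j) * (u (j+1) - u j) := by
    rw [← Finset.sum_sub_distrib]
    exact Finset.sum_congr rfl (fun i _ => by ring)
  have hB : ∑ j ∈ range (n+1), bcoef (1-α) (n-j) * (u (j+1) - u j)
      = (∑ j ∈ range n, bcoef (1-α) (n-j) * (u (j+1) - u j))
        + (u (n+1) - u n) := by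
    rw [Finset.sum_range_succ, Nat.sub_self, bcoef_zero hs, one_mul]
  rw [hA, hB]
  ring

lemma coeff_sum {s : ℝ} (hs : s ≠ 0) (n : ℕ) :
    ∑ j ∈ range (n+1), (bcoef s (n-j) - bcoef s (n+1-j))
      = 1 - bcoef s (n+1) := by
  have := Finset.sum_range_reflect
    (fun j => bcoef s (n-j) - bcoef s (n+1-j)) (n+1)
  rw [← this]
  have h1 : ∀ j ∈ range (n+1),
      (bcoef s (n-(n+1-1-j)) - bcoef s (n+1-(n+1-1-j)))
        = bcoef s j - bcoef s (j+1) := by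
    intro j hj
    have hj' : j ≤ n := by simpa [Nat.lt_succ_iff] using mem_range.1 hj
    have e1 : n - (n+1-1-j) = j := by omega
    have e2 : n + 1 - (n+1-1-j) = j + 1 := by omega
    rw [e1, e2]
  rw [Finset.sum_congr rfl h1, Finset.sum_range_sub' (fun j => bcoef s j), bcoef_zero hs]


/-- with `K = sup_{x_{i,j}, 0 ≤ m ≤ n+1} |g(x_{i,j}, [D_h U^m]_{i,j})|`,
`‖G^{n+1}(𝒰) − G^n(U^0,…,U^n)‖_∞
  ≤ (1 − c_0^{n+2}) max_{0 ≤ m ≤ n} ‖U^{m+1} − U^m‖_∞ + 2Γ(2−α)Δt^α K`. -/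
theorem schemeG_time_increment (α Δt : ℝ) (hα : α ∈ Set.Ioo (0 : ℝ) 1) (hΔt : 0 < Δt)
    (M : ℕ) [NeZero M] (h : ℝ) (hh : h = 1 / (M : ℝ))
    (g : ℝ × ℝ → ℝ × ℝ × ℝ × ℝ → ℝ) (n : ℕ) (U : ℕ → GridFun M) :
    (⨆ p, |schemeG α Δt h g (n + 1) U p - schemeG α Δt h g n U p|)
      ≤ (1 - caputoCoeff α (n + 1) 0)
          * (⨆ m : Fin (n + 1), ⨆ p, |U ((m : ℕ) + 1) p - U (m : ℕ) p|)
        + 2 * Real.Gamma (2 - α) * Δt ^ α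
          * (⨆ m : Fin (n + 2), ⨆ p, |schemeS g h (U (m : ℕ)) p|) := by

  obtain ⟨hα0, hα1⟩ := hα
  have hs0 : (0:ℝ) < 1 - α := by linarith
  have hsne : (1:ℝ) - α ≠ 0 := ne_of_gt hs0
  have hΓ : 0 < Real.Gamma (2 - α) := Real.Gamma_pos_of_pos (by linarith)
  have hρ : 0 ≤ Real.Gamma (2 - α) * Δt ^ α := by positivity
  set D := ⨆ m : Fin (n + 1), ⨆ p, |U ((m : ℕ) + 1) p - U (m : ℕ) p| with hDdef
  set K := ⨆ m : Fin (n + 2), ⨆ p, |schemeS g h (U (m : ℕ)) p| with hKdef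
  have hbdd : ∀ (f : ZMod M × ZMod M → ℝ), BddAbove (Set.range f) :=
    fun f => (Set.finite_range f).bddAbove
  have hbddF : ∀ {k : ℕ} (f : Fin k → ℝ), BddAbove (Set.range f) :=
    fun f => (Set.finite_range f).bddAbove
  have hDle : ∀ j, j < n + 1 → ∀ p, |U (j+1) p - U j p| ≤ D := by
    intro j hj p
    have h1 : |U (j+1) p - U j p| ≤ ⨆ q, |U (j+1) q - U j q| :=
      le_ciSup (f := fun q => |U (j+1) q - U j q|) (hbdd _) p
    have h2 : (⨆ q, |U (j+1) q - U j q|) ≤ D := by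
      have := le_ciSup (f := fun m : Fin (n+1) => ⨆ q, |U ((m:ℕ)+1) q - U (m:ℕ) q|)
        (hbddF _) ⟨j, hj⟩
      simpa using this
    exact h1.trans h2
  have hKle : ∀ j, j < n + 2 → ∀ p, |schemeS g h (U j) p| ≤ K := by
    intro j hj p
    have h1 : |schemeS g h (U j) p| ≤ ⨆ q, |schemeS g h (U j) q| :=
      le_ciSup (f := fun q => |schemeS g h (U j) q|) (hbdd _) p
    have h2 : (⨆ q, |schemeS g h (U j) q|) ≤ K := by
      have := le_ciSup (f := fun m : Fin (n+2) => ⨆ q, |schemeS g h (U (m:ℕ)) q|)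
        (hbddF _) ⟨j, hj⟩
      simpa using this
    exact h1.trans h2
  have hDnn : 0 ≤ D := le_trans (abs_nonneg _) (hDle 0 (Nat.succ_pos n) (0, 0))
  have hc0 : 1 - caputoCoeff α (n+1) 0 = 1 - bcoef (1-α) (n+1) := by
    rw [caputo_zero]
  have key : ∀ p, |schemeG α Δt h g (n + 1) U p - schemeG α Δt h g n U p|
      ≤ (1 - caputoCoeff α (n + 1) 0) * D
        + 2 * Real.Gamma (2 - α) * Δt ^ α * K := by
    intro p
    have hrepr := caputo_diff α hsne n (fun m => U m p)
    have hGdiff : schemeG α Δt h g (n + 1) U p - schemeG α Δt h g n U p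
        = (∑ j ∈ range (n+1),
            (bcoef (1-α) (n-j) - bcoef (1-α) (n+1-j)) * (U (j+1) p - U j p))
          - Real.Gamma (2-α) * Δt ^ α
            * (schemeS g h (U (n+1)) p - schemeS g h (U n) p) := by
      simp only [schemeG]
      rw [← hrepr]
      ring
    rw [hGdiff]
    have h1 : |∑ j ∈ range (n+1),
        (bcoef (1-α) (n-j) - bcoef (1-α) (n+1-j)) * (U (j+1) p - U j p)|
        ≤ (1 - caputoCoeff α (n+1) 0) * D := by
      have hdnn : ∀ j ∈ range (n+1), 0 ≤ bcoef (1-α) (n-j) - bcoef (1-α) (n+1-j) := by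
        intro j hj
        have hj' : j ≤ n := by simpa [Nat.lt_succ_iff] using mem_range.1 hj
        have e : n + 1 - j = (n - j) + 1 := by omega
        rw [e, sub_nonneg]
        exact bcoef_succ_le hs0 (by linarith) (n - j)
      calc |∑ j ∈ range (n+1),
              (bcoef (1-α) (n-j) - bcoef (1-α) (n+1-j)) * (U (j+1) p - U j p)|
          ≤ ∑ j ∈ range (n+1),
              |(bcoef (1-α) (n-j) - bcoef (1-α) (n+1-j)) * (U (j+1) p - U j p)| :=
            Finset.abs_sum_le_sum_abs _ _
        _ ≤ ∑ j ∈ range (n+1),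
              (bcoef (1-α) (n-j) - bcoef (1-α) (n+1-j)) * D := by
            apply Finset.sum_le_sum
            intro j hj
            rw [abs_mul, abs_of_nonneg (hdnn j hj)]
            exact mul_le_mul_of_nonneg_left (hDle j (mem_range.1 hj) p) (hdnn j hj)
        _ = (∑ j ∈ range (n+1), (bcoef (1-α) (n-j) - bcoef (1-α) (n+1-j))) * D := by
            rw [Finset.sum_mul]
        _ = (1 - caputoCoeff α (n+1) 0) * D := by rw [coeff_sum hsne n, hc0]
    have h2 : |Real.Gamma (2-α) * Δt ^ α
          * (schemeS g h (U (n+1)) p - schemeS g h (U n) p)|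
        ≤ 2 * Real.Gamma (2 - α) * Δt ^ α * K := by
      rw [abs_mul, abs_of_nonneg hρ]
      have : |schemeS g h (U (n+1)) p - schemeS g h (U n) p|
          ≤ K + K := le_trans (abs_sub _ _)
            (add_le_add (hKle (n+1) (by omega) p) (hKle n (by omega) p))
      calc Real.Gamma (2-α) * Δt ^ α * |schemeS g h (U (n+1)) p - schemeS g h (U n) p|
          ≤ Real.Gamma (2-α) * Δt ^ α * (K + K) := mul_le_mul_of_nonneg_left this hρ
        _ = 2 * Real.Gamma (2-α) * Δt ^ α * K := by ring
    calc |(∑ j ∈ range (n+1),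
            (bcoef (1-α) (n-j) - bcoef (1-α) (n+1-j)) * (U (j+1) p - U j p))
          - Real.Gamma (2-α) * Δt ^ α
            * (schemeS g h (U (n+1)) p - schemeS g h (U n) p)|
        ≤ |∑ j ∈ range (n+1),
            (bcoef (1-α) (n-j) - bcoef (1-α) (n+1-j)) * (U (j+1) p - U j p)|
          + |Real.Gamma (2-α) * Δt ^ α
            * (schemeS g h (U (n+1)) p - schemeS g h (U n) p)| := abs_sub _ _
      _ ≤ (1 - caputoCoeff α (n + 1) 0) * D
          + 2 * Real.Gamma (2 - α) * Δt ^ α * K := add_le_add h1 h2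
  exact ciSup_le key


end
end

section
/- Assume the scheme operator G^n is monotone and the numerical Hamiltonian g is consistent with a Hamiltonian H, i.e. g(x, q₁, q₁, q₂, q₂) = H(x, (q₁,q₂)) for all x ∈ 𝕋² and (q₁,q₂) ∈ ℝ². Then for every 𝒰 ∈ 𝒢^n, ‖G^n(𝒰)‖_∞ ≤ ‖𝒰‖_∞ + Γ(2−α) Δt^α · sup_{x ∈ 𝕋²} |H(x, 0)|, provided the supremum on the right is finite. -/
noncomputable section

lemma sum_caputo (α : ℝ) (hα : α < 1) (n : ℕ) :
    ∑ m ∈ Finset.range (n + 1), caputoCoeff α n m = 1 := by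
  set b : ℕ → ℝ := fun m => ((n : ℝ) + 1 - m) ^ (1 - α) - ((n : ℝ) - m) ^ (1 - α) with hb
  have hstep : ∀ m : ℕ, caputoCoeff α n (m + 1) = b (m + 1) - b m := by
    intro m
    simp only [caputoCoeff, Nat.succ_ne_zero, if_false, hb]
    push_cast
    ring_nf
  rw [Finset.sum_range_succ']
  have h1 : ∑ i ∈ Finset.range n, caputoCoeff α n (i + 1) = b n - b 0 := by
    rw [Finset.sum_congr rfl (fun i _ => hstep i), Finset.sum_range_sub]
  have h0 : caputoCoeff α n 0 = b 0 := by
    simp [caputoCoeff, hb]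
  rw [h1, h0]
  have : b n = 1 := by
    simp only [hb, sub_self, add_sub_cancel_left]
    rw [Real.one_rpow, Real.zero_rpow (by linarith)]
    ring
  linarith

lemma schemeG_const {M : ℕ} (α Δt h : ℝ) (hα : α < 1)
    (g : ℝ × ℝ → ℝ × ℝ × ℝ × ℝ → ℝ) (H : ℝ × ℝ → ℝ × ℝ → ℝ)
    (hcons : ∀ x : ℝ × ℝ, ∀ q₁ q₂ : ℝ, g x (q₁, q₁, q₂, q₂) = H x (q₁, q₂))
    (n : ℕ) (c : ℝ) (p : ZMod M × ZMod M) :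
    schemeG α Δt h g n (fun _ _ => c) p
      = c - Real.Gamma (2 - α) * Δt ^ α
          * H ((p.1.val : ℝ) * h, (p.2.val : ℝ) * h) (0, 0) := by
  have hS : schemeS g h (fun _ => c : GridFun M) p
      = H ((p.1.val : ℝ) * h, (p.2.val : ℝ) * h) (0, 0) := by
    simp only [schemeS, D1, D2, sub_self, zero_div]
    exact hcons _ 0 0
  simp only [schemeG, hS, ← Finset.sum_mul, sum_caputo α hα n, one_mul]

/-- if the scheme is monotone and `g` is consistent with a Hamiltonian `H`,
then `‖G^n(𝒰)‖_∞ ≤ ‖𝒰‖_∞ + Γ(2−α)Δt^α · sup_x |H(x,0)|` (the sup being finite, i.e.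
bounded by some constant `C`). -/
theorem schemeG_sup_bound (α Δt : ℝ) (hα : α ∈ Set.Ioo (0 : ℝ) 1) (hΔt : 0 < Δt)
    (M : ℕ) [NeZero M] (h : ℝ) (hh : h = 1 / (M : ℝ))
    (g : ℝ × ℝ → ℝ × ℝ × ℝ × ℝ → ℝ) (H : ℝ × ℝ → ℝ × ℝ → ℝ)
    (hcons : ∀ x : ℝ × ℝ, ∀ q₁ q₂ : ℝ, g x (q₁, q₁, q₂, q₂) = H x (q₁, q₂))
    (n : ℕ)
    (hmono : ∀ U V : ℕ → GridFun M,
      (∀ m ≤ n, ∀ p, U m p ≤ V m p) → ∀ p, schemeG α Δt h g n U p ≤ schemeG α Δt h g n V p)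
    (U : ℕ → GridFun M) (C : ℝ) (hC : ∀ x : ℝ × ℝ, |H x (0, 0)| ≤ C) :
    (⨆ p, |schemeG α Δt h g n U p|)
      ≤ (⨆ m : Fin (n + 1), ⨆ p, |U (m : ℕ) p|) + Real.Gamma (2 - α) * Δt ^ α * C := by
  obtain ⟨hα0, hα1⟩ := hα
  set ρ := Real.Gamma (2 - α) * Δt ^ α with hρ
  have hρ0 : 0 ≤ ρ :=
    mul_nonneg (Real.Gamma_pos_of_pos (by linarith)).le (Real.rpow_pos_of_pos hΔt α).le
  set K := ⨆ m : Fin (n + 1), ⨆ p, |U (m : ℕ) p| with hK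
  have hKb : ∀ m ≤ n, ∀ p, |U m p| ≤ K := by
    intro m hm p
    calc |U m p| ≤ ⨆ q, |U m q| :=
        le_ciSup (f := fun q => |U m q|) (Finite.bddAbove_range _) p
      _ = ⨆ q, |U (((⟨m, by omega⟩ : Fin (n + 1)) : ℕ)) q| := rfl
      _ ≤ K := le_ciSup (Finite.bddAbove_range fun m : Fin (n + 1) => ⨆ q, |U (m : ℕ) q|)
          (⟨m, by omega⟩ : Fin (n + 1))
  have hub : ∀ p, schemeG α Δt h g n U p ≤ K + ρ * C := by
    intro p
    have h1 := hmono U (fun _ _ => K) (fun m hm q => (abs_le.mp (hKb m hm q)).2) p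
    rw [schemeG_const α Δt h hα1 g H hcons n K p] at h1
    have h2 := abs_le.mp (hC ((p.1.val : ℝ) * h, (p.2.val : ℝ) * h))
    nlinarith [h2.1, h2.2]
  have hlb : ∀ p, -(K + ρ * C) ≤ schemeG α Δt h g n U p := by
    intro p
    have h1 := hmono (fun _ _ => -K) U (fun m hm q => (abs_le.mp (hKb m hm q)).1) p
    rw [schemeG_const α Δt h hα1 g H hcons n (-K) p] at h1
    have h2 := abs_le.mp (hC ((p.1.val : ℝ) * h, (p.2.val : ℝ) * h))
    nlinarith [h2.1, h2.2]
  exact ciSup_le fun p => abs_le.mpr ⟨hlb p, hub p⟩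

end
end

section
/- Let {U^n}_{n=0}^{N} be a sequence of grid functions generated by the scheme, i.e. U^{n+1}_{i,j} = ∑_{m=0}^{n} c_m^{n+1} U^m_{i,j} − ρ_α S(x_{i,j}, h, U^n) for all n and grid points, and suppose K ≥ 0 satisfies |S(x_{i,j}, h, U^m)| ≤ K for all grid points x_{i,j} and all m = 0,…,N−1. Then for every n = 0,…,N, ‖U^n − U^0‖_∞ ≤ (K Γ(2−α)/(α(1−α))) (nΔt)^α. -/
noncomputable section

/-- Tangent-line inequality for concave `x ↦ x^p`, `0 ≤ p ≤ 1`. -/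
private lemma tangent_rpow {p x y : ℝ} (hp0 : 0 ≤ p) (hp1 : p ≤ 1) (hx : 0 ≤ x) (hy : 0 < y) :
    x ^ p ≤ y ^ p + p * y ^ (p - 1) * (x - y) := by
  have hs : (-1 : ℝ) ≤ x / y - 1 := by
    have h0 : 0 ≤ x / y := div_nonneg hx hy.le
    linarith
  have hb := rpow_one_add_le_one_add_mul_self hs hp0 hp1
  have hxy : (1 + (x / y - 1)) = x / y := by ring
  rw [hxy] at hb
  have hyp : (0:ℝ) < y ^ p := Real.rpow_pos_of_pos hy p
  have h2 : (x / y) ^ p * y ^ p ≤ (1 + p * (x / y - 1)) * y ^ p :=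
    mul_le_mul_of_nonneg_right hb hyp.le
  have h3 : (x / y) ^ p * y ^ p = x ^ p := by
    rw [Real.div_rpow hx hy.le, div_mul_cancel₀ _ hyp.ne']
  have h4 : y ^ (p - 1) = y ^ p / y := by
    rw [Real.rpow_sub hy, Real.rpow_one]
  rw [h3] at h2
  rw [h4]
  calc x ^ p ≤ (1 + p * (x / y - 1)) * y ^ p := h2
    _ = y ^ p + p * (y ^ p / y) * (x - y) := by field_simp

private def capA (α : ℝ) (j : ℕ) : ℝ := ((j:ℝ) + 1) ^ (1 - α) - (j:ℝ) ^ (1 - α)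

private lemma coeff_zero (α : ℝ) (n : ℕ) : caputoCoeff α n 0 = capA α n := by
  simp [caputoCoeff, capA]

private lemma coeff_succ (α : ℝ) {n m : ℕ} (hm : m < n) :
    caputoCoeff α n (m + 1) = capA α (n - m - 1) - capA α (n - m) := by
  obtain ⟨k, rfl⟩ : ∃ k, n = m + 1 + k := ⟨n - (m+1), by omega⟩
  have h1 : m + 1 + k - m - 1 = k := by omega
  have h2 : m + 1 + k - m = k + 1 := by omega
  rw [h1, h2]
  have e1 : ((m + 1 + k : ℕ) : ℝ) + 1 - ((m+1 : ℕ) : ℝ) = (k:ℝ) + 1 := by push_cast; ring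
  have e2 : ((m + 1 + k : ℕ) : ℝ) + 2 - ((m+1 : ℕ) : ℝ) = (k:ℝ) + 2 := by push_cast; ring
  have e3 : ((m + 1 + k : ℕ) : ℝ) - ((m+1 : ℕ) : ℝ) = (k:ℝ) := by push_cast; ring
  simp only [caputoCoeff, if_neg (Nat.succ_ne_zero m), capA]
  rw [e1, e2, e3]
  have e4 : ((k + 1 : ℕ) : ℝ) = (k:ℝ) + 1 := by push_cast; ring
  rw [e4, show (k:ℝ) + 1 + 1 = (k:ℝ) + 2 from by ring]
  ring

private lemma capA_zero {α : ℝ} (hβ : (0:ℝ) < 1 - α) : capA α 0 = 1 := by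
  simp [capA, Real.zero_rpow hβ.ne', Real.one_rpow]

private lemma sum_coeff {α : ℝ} (hβ : (0:ℝ) < 1 - α) (n : ℕ) :
    ∑ m ∈ Finset.range (n + 1), caputoCoeff α n m = 1 := by
  rw [Finset.sum_range_succ']
  have h1 : ∑ i ∈ Finset.range n, caputoCoeff α n (i + 1)
      = ∑ i ∈ Finset.range n, (capA α (n - i - 1) - capA α (n - i)) :=
    Finset.sum_congr rfl fun i hi => coeff_succ α (Finset.mem_range.mp hi)
  have h2 : ∑ i ∈ Finset.range n, (capA α (n - i - 1) - capA α (n - i))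
      = ∑ j ∈ Finset.range n, (capA α j - capA α (j + 1)) := by
    rw [← Finset.sum_range_reflect (fun j => capA α j - capA α (j + 1)) n]
    refine Finset.sum_congr rfl fun i hi => ?_
    have hi' := Finset.mem_range.mp hi
    have e1 : n - 1 - i = n - i - 1 := by omega
    rw [e1, show n - i - 1 + 1 = n - i from by omega]
  rw [h1, h2, Finset.sum_range_sub' (fun j => capA α j) n, coeff_zero, capA_zero hβ]
  ring

private lemma sum_coeff_mul {α : ℝ} (hβ : (0:ℝ) < 1 - α) (n : ℕ) :
    ∑ m ∈ Finset.range (n + 1), caputoCoeff α n m * (m:ℝ)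
      = (n:ℝ) + 1 - ((n:ℝ) + 1) ^ (1 - α) := by
  rw [Finset.sum_range_succ']
  simp only [Nat.cast_zero, mul_zero, add_zero]
  have h1 : ∑ i ∈ Finset.range n, caputoCoeff α n (i + 1) * ((i + 1 : ℕ) : ℝ)
      = ∑ j ∈ Finset.range n, (capA α j - capA α (j + 1)) * (((n - j : ℕ)) : ℝ) := by
    rw [← Finset.sum_range_reflect (fun j => (capA α j - capA α (j + 1)) * (((n - j : ℕ)) : ℝ)) n]
    refine Finset.sum_congr rfl fun i hi => ?_
    have hi' := Finset.mem_range.mp hi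
    have e1 : n - 1 - i = n - i - 1 := by omega
    rw [coeff_succ α hi', e1, show n - i - 1 + 1 = n - i from by omega,
      show n - (n - i - 1) = i + 1 from by omega]
  rw [h1]
  have h2 : ∀ j ∈ Finset.range n, (capA α j - capA α (j + 1)) * (((n - j : ℕ)) : ℝ)
      = ((((n:ℝ) - (j:ℕ)) * capA α j) - (((n:ℝ) - ((j+1:ℕ))) * capA α (j + 1)))
        - ((((j+1:ℕ):ℝ) + 1) ^ (1 - α) - ((j:ℝ) + 1) ^ (1 - α)) := by
    intro j hj
    have hj' := Finset.mem_range.mp hj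
    have e : (((n - j : ℕ)) : ℝ) = (n:ℝ) - (j:ℝ) := by
      rw [Nat.cast_sub hj'.le]
    rw [e]
    simp only [capA]
    push_cast
    ring
  rw [Finset.sum_congr rfl h2, Finset.sum_sub_distrib]
  rw [Finset.sum_range_sub' (fun j => ((n:ℝ) - (j:ℕ)) * capA α j) n]
  rw [Finset.sum_range_sub (fun j => ((j:ℝ) + 1) ^ (1 - α)) n]
  rw [capA_zero hβ]
  simp only [Nat.cast_zero, sub_zero, sub_self, zero_mul, mul_one]
  rw [show ((0:ℝ) + 1) = 1 from by ring, Real.one_rpow]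
  ring

private lemma coeff_nonneg {α : ℝ} (hα0 : 0 < α) (hα1 : α < 1) {n m : ℕ} (hm : m ≤ n) :
    0 ≤ caputoCoeff α n m := by
  have hβ0 : (0:ℝ) ≤ 1 - α := by linarith
  have hβ1 : (1:ℝ) - α ≤ 1 := by linarith
  cases m with
  | zero =>
    rw [coeff_zero]
    have h := Real.rpow_le_rpow (Nat.cast_nonneg (α := ℝ) n)
      (by linarith [Nat.cast_nonneg (α := ℝ) n] : (n:ℝ) ≤ (n:ℝ) + 1) hβ0
    simpa [capA] using h
  | succ m =>
    have hm' : m < n := by omega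
    rw [coeff_succ α hm']
    obtain ⟨k, hk⟩ : ∃ k, n - m - 1 = k := ⟨n - m - 1, rfl⟩
    have hk2 : n - m = k + 1 := by omega
    rw [hk, hk2]
    have hy : (0:ℝ) < (k:ℝ) + 1 := by positivity
    have t1 := tangent_rpow hβ0 hβ1 (by positivity : (0:ℝ) ≤ (k:ℝ) + 2) hy
    have t2 := tangent_rpow hβ0 hβ1 (Nat.cast_nonneg (α := ℝ) k) hy
    have e4 : ((k + 1 : ℕ) : ℝ) = (k:ℝ) + 1 := by push_cast; ring
    simp only [capA, e4]
    have e5 : ((k:ℝ) + 1) + 1 = (k:ℝ) + 2 := by ring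
    rw [e5]
    nlinarith [t1, t2]

private lemma key_sum {α : ℝ} (hα0 : 0 < α) (hα1 : α < 1) (n : ℕ) :
    ∑ m ∈ Finset.range (n + 1), caputoCoeff α n m * (m:ℝ) ^ α
      ≤ ((n:ℝ) + 1) ^ α - α := by
  have hβ : (0:ℝ) < 1 - α := by linarith
  set y : ℝ := (n:ℝ) + 1 with hy_def
  have hy : (0:ℝ) < y := by positivity
  set A : ℝ := y ^ α with hA
  set B : ℝ := α * y ^ (α - 1) with hB
  have step1 : ∑ m ∈ Finset.range (n + 1), caputoCoeff α n m * (m:ℝ) ^ α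
      ≤ ∑ m ∈ Finset.range (n + 1), caputoCoeff α n m * (A + B * ((m:ℝ) - y)) := by
    refine Finset.sum_le_sum fun m hm => ?_
    have hm' : m ≤ n := by
      have := Finset.mem_range.mp hm; omega
    refine mul_le_mul_of_nonneg_left ?_ (coeff_nonneg hα0 hα1 hm')
    have := tangent_rpow hα0.le hα1.le (Nat.cast_nonneg (α := ℝ) m) hy
    calc ((m:ℝ)) ^ α ≤ y ^ α + α * y ^ (α - 1) * ((m:ℝ) - y) := this
      _ = A + B * ((m:ℝ) - y) := by rw [hA, hB]
  have expand : ∑ m ∈ Finset.range (n + 1), caputoCoeff α n m * (A + B * ((m:ℝ) - y))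
      = A * (∑ m ∈ Finset.range (n + 1), caputoCoeff α n m)
        + B * (∑ m ∈ Finset.range (n + 1), caputoCoeff α n m * (m:ℝ))
        - B * y * (∑ m ∈ Finset.range (n + 1), caputoCoeff α n m) := by
    rw [Finset.mul_sum, Finset.mul_sum, Finset.mul_sum, ← Finset.sum_add_distrib,
      ← Finset.sum_sub_distrib]
    exact Finset.sum_congr rfl fun m _ => by ring
  rw [expand, sum_coeff hβ, sum_coeff_mul hβ] at step1
  have hpow : y ^ (α - 1) * y ^ (1 - α) = 1 := by
    rw [← Real.rpow_add hy]
    norm_num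
  calc ∑ m ∈ Finset.range (n + 1), caputoCoeff α n m * (m:ℝ) ^ α
      ≤ A * 1 + B * ((n:ℝ) + 1 - ((n:ℝ) + 1) ^ (1 - α)) - B * y * 1 := step1
    _ = A - α * (y ^ (α - 1) * y ^ (1 - α)) := by rw [hB, hy_def]; ring
    _ = ((n:ℝ) + 1) ^ α - α := by rw [hpow, hA, hy_def]; ring

/-- if `{U^n}_{n=0}^N` is generated by the scheme and
`|S(x_{i,j},h,U^m)| ≤ K` for all grid points and `m = 0,…,N−1`, then
`‖U^n − U^0‖_∞ ≤ (KΓ(2−α)/(α(1−α))) (nΔt)^α` for every `n = 0,…,N`. -/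
theorem scheme_growth_bound (α Δt : ℝ) (hα : α ∈ Set.Ioo (0 : ℝ) 1) (hΔt : 0 < Δt)
    (M : ℕ) [NeZero M] (h : ℝ) (hh : h = 1 / (M : ℝ))
    (g : ℝ × ℝ → ℝ × ℝ × ℝ × ℝ → ℝ) (N : ℕ) (U : ℕ → GridFun M)
    (hscheme : ∀ n < N, ∀ p,
      U (n + 1) p = (∑ m ∈ Finset.range (n + 1), caputoCoeff α n m * U m p)
        - Real.Gamma (2 - α) * Δt ^ α * schemeS g h (U n) p)
    (K : ℝ) (hK : 0 ≤ K)
    (hbound : ∀ p, ∀ m < N, |schemeS g h (U m) p| ≤ K) :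
    ∀ n ≤ N, (⨆ p, |U n p - U 0 p|)
      ≤ K * Real.Gamma (2 - α) / (α * (1 - α)) * ((n : ℝ) * Δt) ^ α := by
  obtain ⟨hα0, hα1⟩ := hα
  have hβ : (0:ℝ) < 1 - α := by linarith
  have hΓ : 0 < Real.Gamma (2 - α) := Real.Gamma_pos_of_pos (by linarith)
  have hαβ : (0:ℝ) < α * (1 - α) := mul_pos hα0 hβ
  set C : ℝ := K * Real.Gamma (2 - α) / (α * (1 - α)) with hC_def
  have hC : 0 ≤ C := div_nonneg (mul_nonneg hK hΓ.le) hαβ.le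
  have hΔα : (0:ℝ) < Δt ^ α := Real.rpow_pos_of_pos hΔt α
  intro n
  induction n using Nat.strong_induction_on with
  | _ n ih =>
    intro hnN
    cases n with
    | zero =>
      apply ciSup_le
      intro p
      simp [Real.zero_rpow hα0.ne']
    | succ n =>
      have hnN' : n < N := by omega
      apply ciSup_le
      intro p
      have hU := hscheme n hnN' p
      have hsum1 := sum_coeff hβ n
      have hrw : U (n+1) p - U 0 p
          = (∑ m ∈ Finset.range (n+1), caputoCoeff α n m * (U m p - U 0 p))
            - Real.Gamma (2-α) * Δt ^ α * schemeS g h (U n) p := by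
        have hsp : ∑ m ∈ Finset.range (n+1), caputoCoeff α n m * (U m p - U 0 p)
            = (∑ m ∈ Finset.range (n+1), caputoCoeff α n m * U m p) - U 0 p := by
          simp only [mul_sub]
          rw [Finset.sum_sub_distrib, ← Finset.sum_mul, hsum1, one_mul]
        rw [hsp, hU]
        ring
      have hVm : ∀ m ∈ Finset.range (n+1), |U m p - U 0 p| ≤ C * Δt ^ α * (m:ℝ) ^ α := by
        intro m hm
        have hm' : m < n + 1 := Finset.mem_range.mp hm
        have h1 : |U m p - U 0 p| ≤ ⨆ q, |U m q - U 0 q| :=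
          le_ciSup (f := fun q => |U m q - U 0 q|) (Finite.bddAbove_range _) p
        have h2 := ih m hm' (by omega)
        have h3 : ((m:ℝ) * Δt) ^ α = (m:ℝ) ^ α * Δt ^ α :=
          Real.mul_rpow (Nat.cast_nonneg m) hΔt.le
        calc |U m p - U 0 p| ≤ C * ((m:ℝ) * Δt) ^ α := h1.trans h2
          _ = C * Δt ^ α * (m:ℝ) ^ α := by rw [h3]; ring
      have hA1 : |∑ m ∈ Finset.range (n+1), caputoCoeff α n m * (U m p - U 0 p)|
          ≤ ∑ m ∈ Finset.range (n+1), caputoCoeff α n m * (C * Δt ^ α * (m:ℝ) ^ α) := by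
        refine (Finset.abs_sum_le_sum_abs _ _).trans (Finset.sum_le_sum fun m hm => ?_)
        have hm' : m ≤ n := by
          have := Finset.mem_range.mp hm; omega
        rw [abs_mul, abs_of_nonneg (coeff_nonneg hα0 hα1 hm')]
        exact mul_le_mul_of_nonneg_left (hVm m hm) (coeff_nonneg hα0 hα1 hm')
      have hA2 : |Real.Gamma (2-α) * Δt ^ α * schemeS g h (U n) p|
          ≤ Real.Gamma (2-α) * Δt ^ α * K := by
        rw [abs_mul, abs_of_nonneg (by positivity : (0:ℝ) ≤ Real.Gamma (2-α) * Δt ^ α)]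
        exact mul_le_mul_of_nonneg_left (hbound p n hnN') (by positivity)
      have hA3 : ∑ m ∈ Finset.range (n+1), caputoCoeff α n m * (C * Δt ^ α * (m:ℝ) ^ α)
          ≤ C * Δt ^ α * (((n:ℝ) + 1) ^ α - α) := by
        have e : ∑ m ∈ Finset.range (n+1), caputoCoeff α n m * (C * Δt ^ α * (m:ℝ) ^ α)
            = C * Δt ^ α * ∑ m ∈ Finset.range (n+1), caputoCoeff α n m * (m:ℝ) ^ α := by
          rw [Finset.mul_sum]
          exact Finset.sum_congr rfl fun m _ => by ring
        rw [e]
        exact mul_le_mul_of_nonneg_left (key_sum hα0 hα1 n) (by positivity)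
      have hGK : Real.Gamma (2-α) * Δt ^ α * K = C * Δt ^ α * (α * (1 - α)) := by
        rw [hC_def]
        field_simp
      have hcast : (((n+1 : ℕ)) : ℝ) = (n:ℝ) + 1 := by push_cast; ring
      have hfin : C * ((((n+1 : ℕ)) : ℝ) * Δt) ^ α = C * Δt ^ α * ((n:ℝ) + 1) ^ α := by
        rw [hcast, Real.mul_rpow (by positivity) hΔt.le]
        ring
      rw [hrw, hfin]
      calc |(∑ m ∈ Finset.range (n+1), caputoCoeff α n m * (U m p - U 0 p))
            - Real.Gamma (2-α) * Δt ^ α * schemeS g h (U n) p|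
          ≤ |∑ m ∈ Finset.range (n+1), caputoCoeff α n m * (U m p - U 0 p)|
            + |Real.Gamma (2-α) * Δt ^ α * schemeS g h (U n) p| := abs_sub _ _
        _ ≤ C * Δt ^ α * (((n:ℝ) + 1) ^ α - α) + C * Δt ^ α * (α * (1 - α)) := by
            rw [← hGK]
            exact add_le_add (hA1.trans hA3) hA2
        _ = C * Δt ^ α * ((n:ℝ) + 1) ^ α - C * Δt ^ α * (α * α) := by ring
        _ ≤ C * Δt ^ α * ((n:ℝ) + 1) ^ α := by
            have : 0 ≤ C * Δt ^ α * (α * α) := by positivity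
            linarith

end
end
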